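/- Let Ω ⊂ ℝ be a nonempty bounded open set and let f : ℝ → ℝ be a continuous function such that f(ξ) ≥ γ(|ξ|) for all ξ, where γ : [0,∞) → [0,∞) is continuous, increasing, and γ(t) → +∞ as t → +∞. Then for every Lipschitz function u₀ : ℝ → ℝ there exists a Lipschitz function u : ℝ → ℝ with u(x) = u₀(x) for all x ∉ Ω such that ess sup_{x∈Ω} f(u'(x)) ≤ ess sup_{x∈Ω} f(v'(x)) for every Lipschitz v : ℝ → ℝ with v(x) = u₀(x) for all x ∉ Ω; i.e., the supremal minimization problem in dimension one always admits a solution. -/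

import Mathlib

open Set MeasureTheory Filter
open scoped NNReal

open scoped ENNReal


lemma abs_deriv_le_of_lip {v : ℝ → ℝ} {K : ℝ≥0} (hv : LipschitzWith K v) (x : ℝ) :
    |deriv v x| ≤ K := by
  have h1 : deriv v x = fderiv ℝ v x 1 := (fderiv_apply_one_eq_deriv).symm
  calc |deriv v x| = ‖fderiv ℝ v x 1‖ := by rw [h1]; rfl
    _ ≤ ‖fderiv ℝ v x‖ * ‖(1:ℝ)‖ := (fderiv ℝ v x).le_opNorm 1
    _ ≤ K := by simpa using norm_fderiv_le_of_lipschitz ℝ hv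

lemma lip_sub_le {v : ℝ → ℝ} {K : ℝ≥0} (hv : LipschitzWith K v) {a b c : ℝ} (hab : a ≤ b)
    (hc : ∀ᵐ x ∂(volume.restrict (Set.Ioo a b)), deriv v x ≤ c) :
    v b - v a ≤ c * (b - a) := by
  have hlipr : ∀ x y : ℝ, x ≤ y → v y - v x ≤ K * (y - x) := by
    intro x y hxy
    have := hv.dist_le_mul y x
    rw [Real.dist_eq, Real.dist_eq] at this
    have h2 := le_trans (le_abs_self _) this
    rw [abs_of_nonneg (by linarith)] at h2
    linarith
  by_cases hcK : (K : ℝ) ≤ c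
  · calc v b - v a ≤ K * (b - a) := hlipr a b hab
      _ ≤ c * (b - a) := by nlinarith
  push_neg at hcK
  set g : StieltjesFunction ℝ :=
    { toFun := fun x => K * x - v x
      mono' := by
        intro x y hxy
        have := hlipr x y hxy
        simp only
        linarith
      right_continuous' := by
        intro x
        exact ((continuous_const.mul continuous_id).sub hv.continuous).continuousWithinAt } with hg
  have hderiv : ∀ᵐ x, (g.measure.rnDeriv volume x).toReal = K - deriv v x := by
    filter_upwards [g.ae_hasDerivAt, hv.ae_differentiableAt] with x h1 h2
    have h3 : HasDerivAt g ((K : ℝ) - deriv v x) x := by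
      have := ((hasDerivAt_id x).const_mul (K : ℝ)).sub h2.hasDerivAt
      rw [mul_one] at this
      exact this
    exact h1.unique h3
  have hlow : ∀ᵐ x ∂(volume.restrict (Set.Ioo a b)),
      ENNReal.ofReal (K - c) ≤ g.measure.rnDeriv volume x := by
    filter_upwards [hc, ae_restrict_of_ae hderiv] with x h1 h2
    refine ENNReal.ofReal_le_of_le_toReal ?_
    rw [h2]; linarith
  have key : ENNReal.ofReal ((K - c) * (b - a)) ≤ ENNReal.ofReal (g b - g a) := by
    calc ENNReal.ofReal ((K - c) * (b - a))
        = ENNReal.ofReal (K - c) * volume (Set.Ioo a b) := by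
          rw [Real.volume_Ioo, ENNReal.ofReal_mul (by linarith)]
      _ = ∫⁻ _ in Set.Ioo a b, ENNReal.ofReal (K - c) ∂volume := by
          rw [setLIntegral_const]
      _ ≤ ∫⁻ x in Set.Ioo a b, g.measure.rnDeriv volume x ∂volume := lintegral_mono_ae hlow
      _ ≤ ∫⁻ x in Set.Ioc a b, g.measure.rnDeriv volume x ∂volume :=
          lintegral_mono_set Set.Ioo_subset_Ioc_self
      _ = (volume.withDensity (g.measure.rnDeriv volume)) (Set.Ioc a b) := by
          rw [withDensity_apply _ measurableSet_Ioc]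
      _ ≤ g.measure (Set.Ioc a b) := Measure.withDensity_rnDeriv_le _ _ _
      _ = ENNReal.ofReal (g b - g a) := g.measure_Ioc a b
  have hg0 : (0:ℝ) ≤ g b - g a := sub_nonneg.2 (g.mono' hab)
  rw [ENNReal.ofReal_le_ofReal_iff hg0] at key
  have : g b - g a = K * (b - a) - (v b - v a) := by simp [hg]; ring
  nlinarith

lemma lip_le_sub {v : ℝ → ℝ} {K : ℝ≥0} (hv : LipschitzWith K v) {a b c : ℝ} (hab : a ≤ b)
    (hc : ∀ᵐ x ∂(volume.restrict (Set.Ioo a b)), c ≤ deriv v x) :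
    c * (b - a) ≤ v b - v a := by
  have hneg : LipschitzWith K (fun x => -v x) := LipschitzWith.neg hv
  have h2 : ∀ᵐ x ∂(volume.restrict (Set.Ioo a b)), deriv (fun x => -v x) x ≤ -c := by
    filter_upwards [hc] with x h1
    rw [deriv.fun_neg]
    linarith
  have := lip_sub_le hneg hab h2
  nlinarith

lemma exists_upper {f : ℝ → ℝ} (hf : Continuous f) {v : ℝ → ℝ} {K : ℝ≥0}
    (hv : LipschitzWith K v) {a b M : ℝ} (hab : a < b)
    (hM : ∀ᵐ x ∂(volume.restrict (Set.Ioo a b)), f (deriv v x) ≤ M) :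
    ∃ ξ, (v b - v a) / (b - a) ≤ ξ ∧ f ξ ≤ M := by
  set s := (v b - v a) / (b - a) with hs
  by_contra hcon
  push_neg at hcon
  set A : Set ℝ := Set.Icc (s - 1) (K : ℝ) ∩ f ⁻¹' (Set.Iic M) with hA
  have hAclosed : IsClosed A := isClosed_Icc.inter (isClosed_Iic.preimage hf)
  have hAcomp : IsCompact A :=
    isCompact_Icc.of_isClosed_subset hAclosed Set.inter_subset_left
  have hBcomp : IsCompact (insert (s - 1) A) := hAcomp.insert _
  have hBne : (insert (s - 1) A).Nonempty := Set.insert_nonempty _ _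
  set c := sSup (insert (s - 1) A) with hc
  have hcmem : c ∈ insert (s - 1) A := hBcomp.sSup_mem hBne
  have hclt : c < s := by
    rcases hcmem with h | h
    · rw [h]; linarith
    · by_contra hge
      push_neg at hge
      exact absurd (hcon c hge) (not_lt.2 h.2)
  have hcge : s - 1 ≤ c := le_csSup hBcomp.bddAbove (Set.mem_insert _ _)
  have hae : ∀ᵐ x ∂(volume.restrict (Set.Ioo a b)), deriv v x ≤ c := by
    filter_upwards [hM] with x h1
    rcases le_or_gt (s - 1) (deriv v x) with h2 | h2
    · have hd : deriv v x ∈ A := by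
        refine ⟨⟨h2, ?_⟩, h1⟩
        have := abs_deriv_le_of_lip hv x
        exact (abs_le.1 this).2
      exact le_csSup hBcomp.bddAbove (Set.mem_insert_of_mem _ hd)
    · linarith
  have := lip_sub_le hv hab.le hae
  have hb0 : b - a ≠ 0 := by linarith
  have hsb : v b - v a = s * (b - a) := by rw [hs]; field_simp
  nlinarith

lemma exists_lower {f : ℝ → ℝ} (hf : Continuous f) {v : ℝ → ℝ} {K : ℝ≥0}
    (hv : LipschitzWith K v) {a b M : ℝ} (hab : a < b)
    (hM : ∀ᵐ x ∂(volume.restrict (Set.Ioo a b)), f (deriv v x) ≤ M) :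
    ∃ ξ, ξ ≤ (v b - v a) / (b - a) ∧ f ξ ≤ M := by
  have hneg : LipschitzWith K (fun x => -v x) := hv.neg
  have hf2 : Continuous (fun ξ => f (-ξ)) := hf.comp continuous_neg
  have hM2 : ∀ᵐ x ∂(volume.restrict (Set.Ioo a b)),
      (fun ξ => f (-ξ)) (deriv (fun y => -v y) x) ≤ M := by
    filter_upwards [hM] with x h1
    simpa [deriv.neg] using h1
  obtain ⟨ξ, h1, h2⟩ := exists_upper hf2 hneg hab hM2
  refine ⟨-ξ, ?_, h2⟩
  have : ((-v b) - (-v a)) / (b - a) = -((v b - v a) / (b - a)) := by ring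
  rw [this] at h1
  linarith

noncomputable def tsl (A a c ξ₁ ξ₂ : ℝ) (x : ℝ) : ℝ :=
  A + ξ₁ * (min x c - a) + ξ₂ * (x - min x c)

lemma tsl_left {A a c ξ₁ ξ₂ x : ℝ} (h : x ≤ c) : tsl A a c ξ₁ ξ₂ x = A + ξ₁ * (x - a) := by
  simp [tsl, min_eq_left h]

lemma tsl_right {A a c ξ₁ ξ₂ x : ℝ} (h : c ≤ x) :
    tsl A a c ξ₁ ξ₂ x = A + ξ₁ * (c - a) + ξ₂ * (x - c) := by
  simp [tsl, min_eq_right h]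

lemma tsl_lip {A a c ξ₁ ξ₂ R : ℝ} (h₁ : |ξ₁| ≤ R) (h₂ : |ξ₂| ≤ R) :
    LipschitzWith R.toNNReal (tsl A a c ξ₁ ξ₂) := by
  have hR : 0 ≤ R := le_trans (abs_nonneg _) h₁
  have key : ∀ x y : ℝ, x ≤ y → |tsl A a c ξ₁ ξ₂ y - tsl A a c ξ₁ ξ₂ x| ≤ R * (y - x) := by
    intro x y hxy
    set δ₁ := min y c - min x c with hδ₁
    have hd1 : 0 ≤ δ₁ := by
      rw [hδ₁]; exact sub_nonneg.2 (min_le_min hxy le_rfl)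
    have hd2 : δ₁ ≤ y - x := by
      rw [hδ₁]
      rcases le_total y c with h | h
      · rw [min_eq_left h]
        have : x ≤ min x c := le_min le_rfl (hxy.trans h)
        linarith [min_le_left x c]
      · rw [min_eq_right h]
        rcases le_total x c with h' | h'
        · rw [min_eq_left h']; linarith
        · rw [min_eq_right h']; linarith
    have hval : tsl A a c ξ₁ ξ₂ y - tsl A a c ξ₁ ξ₂ x = ξ₁ * δ₁ + ξ₂ * ((y - x) - δ₁) := by
      simp only [tsl, hδ₁]; ring
    rw [hval]
    have e1 : |ξ₁ * δ₁| = |ξ₁| * δ₁ := by rw [abs_mul, abs_of_nonneg hd1]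
    have e2 : |ξ₂ * ((y - x) - δ₁)| = |ξ₂| * ((y - x) - δ₁) := by
      rw [abs_mul, abs_of_nonneg (by linarith : (0:ℝ) ≤ (y - x) - δ₁)]
    calc |ξ₁ * δ₁ + ξ₂ * ((y - x) - δ₁)| ≤ |ξ₁ * δ₁| + |ξ₂ * ((y - x) - δ₁)| := abs_add_le _ _
      _ = |ξ₁| * δ₁ + |ξ₂| * ((y - x) - δ₁) := by rw [e1, e2]
      _ ≤ R * δ₁ + R * ((y - x) - δ₁) := by
          have := mul_le_mul_of_nonneg_right h₁ hd1
          have := mul_le_mul_of_nonneg_right h₂ (by linarith : (0:ℝ) ≤ (y - x) - δ₁)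
          linarith
      _ = R * (y - x) := by ring
  refine LipschitzWith.of_dist_le_mul fun x y => ?_
  rw [Real.dist_eq, Real.dist_eq, Real.coe_toNNReal _ hR]
  rcases le_total x y with h | h
  · have h2 := key x y h
    rw [abs_sub_comm, abs_sub_comm x y, abs_of_nonneg (by linarith : (0:ℝ) ≤ y - x)]
    exact h2
  · have h2 := key y x h
    rw [abs_of_nonneg (by linarith : (0:ℝ) ≤ x - y)]
    exact h2

lemma tsl_deriv_left {A a c ξ₁ ξ₂ x : ℝ} (h : x < c) : deriv (tsl A a c ξ₁ ξ₂) x = ξ₁ := by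
  have hev : tsl A a c ξ₁ ξ₂ =ᶠ[nhds x] fun z => A + ξ₁ * (z - a) := by
    filter_upwards [Iio_mem_nhds h] with z hz
    exact tsl_left (le_of_lt hz)
  rw [hev.deriv_eq]
  have : HasDerivAt (fun z : ℝ => A + ξ₁ * (z - a)) ξ₁ x := by
    simpa using (((hasDerivAt_id x).sub_const a).const_mul ξ₁).const_add A
  exact this.deriv

lemma tsl_deriv_right {A a c ξ₁ ξ₂ x : ℝ} (h : c < x) : deriv (tsl A a c ξ₁ ξ₂) x = ξ₂ := by
  have hev : tsl A a c ξ₁ ξ₂ =ᶠ[nhds x] fun z => A + ξ₁ * (c - a) + ξ₂ * (z - c) := by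
    filter_upwards [Ioi_mem_nhds h] with z hz
    exact tsl_right (le_of_lt hz)
  rw [hev.deriv_eq]
  have : HasDerivAt (fun z : ℝ => A + ξ₁ * (c - a) + ξ₂ * (z - c)) ξ₂ x := by
    simpa using (((hasDerivAt_id x).sub_const c).const_mul ξ₂).const_add (A + ξ₁ * (c - a))
  exact this.deriv

lemma open_eq_Ioo {S : Set ℝ} (ho : IsOpen S) (hc : S.OrdConnected)
    (hb : Bornology.IsBounded S) (hne : S.Nonempty) :
    S = Set.Ioo (sInf S) (sSup S) := by
  have hbb : BddBelow S := hb.bddBelow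
  have hba : BddAbove S := hb.bddAbove
  have hInf : sInf S ∉ S := by
    intro hmem
    obtain ⟨ε, hε, hball⟩ := Metric.isOpen_iff.1 ho _ hmem
    have : sInf S - ε / 2 ∈ S := by
      apply hball
      rw [Metric.mem_ball, Real.dist_eq]
      rw [abs_of_nonpos (by linarith)]
      linarith
    have := csInf_le hbb this
    linarith
  have hSup : sSup S ∉ S := by
    intro hmem
    obtain ⟨ε, hε, hball⟩ := Metric.isOpen_iff.1 ho _ hmem
    have : sSup S + ε / 2 ∈ S := by
      apply hball
      rw [Metric.mem_ball, Real.dist_eq, abs_of_nonneg (by linarith)]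
      linarith
    have := le_csSup hba this
    linarith
  apply Set.eq_of_subset_of_subset
  · intro x hx
    constructor
    · exact lt_of_le_of_ne (csInf_le hbb hx) fun h => hInf (h ▸ hx)
    · exact lt_of_le_of_ne (le_csSup hba hx) fun h => hSup (h.symm ▸ hx)
  · intro y hy
    obtain ⟨x₁, hx₁, hx₁lt⟩ := (csInf_lt_iff hbb hne).1 hy.1
    obtain ⟨x₂, hx₂, hx₂gt⟩ := (lt_csSup_iff hba hne).1 hy.2
    exact hc.out hx₁ hx₂ ⟨hx₁lt.le, hx₂gt.le⟩

lemma exists_min_pair {f : ℝ → ℝ} (hf : Continuous f) {C R : ℝ}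
    (hR : ∀ t : ℝ, R < |t| → C < f t) {s : ℝ} (hsR : |s| ≤ R) (hfs : f s ≤ C) :
    ∃ ξ₁ ξ₂ : ℝ, ξ₁ ≤ s ∧ s ≤ ξ₂ ∧ |ξ₁| ≤ R ∧ |ξ₂| ≤ R ∧
      ∀ η₁ η₂ : ℝ, η₁ ≤ s → s ≤ η₂ → max (f ξ₁) (f ξ₂) ≤ max (f η₁) (f η₂) := by
  obtain ⟨hsl, hsr⟩ := abs_le.1 hsR
  set P : Set (ℝ × ℝ) := Set.Icc (-R) s ×ˢ Set.Icc s R with hP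
  have hPc : IsCompact P := isCompact_Icc.prod isCompact_Icc
  have hPne : P.Nonempty := ⟨(s, s), ⟨⟨hsl, le_rfl⟩, ⟨le_rfl, hsr⟩⟩⟩
  have hcont : ContinuousOn (fun p : ℝ × ℝ => max (f p.1) (f p.2)) P :=
    ((hf.comp continuous_fst).max (hf.comp continuous_snd)).continuousOn
  obtain ⟨p, hpP, hpmin⟩ := hPc.exists_isMinOn hPne hcont
  refine ⟨p.1, p.2, hpP.1.2, hpP.2.1, abs_le.2 ⟨hpP.1.1, hpP.1.2.trans hsr⟩,
    abs_le.2 ⟨hsl.trans hpP.2.1, hpP.2.2⟩, ?_⟩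
  intro η₁ η₂ h₁ h₂
  have hss : ((s, s) : ℝ × ℝ) ∈ P := ⟨⟨hsl, le_rfl⟩, ⟨le_rfl, hsr⟩⟩
  have hmle : max (f p.1) (f p.2) ≤ C := by
    have h0 := hpmin hss
    simp only at h0
    exact h0.trans (by simp [hfs])
  rcases lt_or_ge R |η₁| with h | h
  · have := hR η₁ h
    exact le_trans hmle (le_max_of_le_left this.le)
  rcases lt_or_ge R |η₂| with h' | h'
  · have := hR η₂ h'
    exact le_trans hmle (le_max_of_le_right this.le)
  · have hη : ((η₁, η₂) : ℝ × ℝ) ∈ P := ⟨⟨(abs_le.1 h).1, h₁⟩, ⟨h₂, (abs_le.1 h').2⟩⟩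
    exact hpmin hη
noncomputable def knk (a b s ξ₁ ξ₂ : ℝ) : ℝ :=
  if ξ₂ = ξ₁ then b else a + (b - a) * (ξ₂ - s) / (ξ₂ - ξ₁)

lemma knk_mem {a b s ξ₁ ξ₂ : ℝ} (hab : a ≤ b) (h₁ : ξ₁ ≤ s) (h₂ : s ≤ ξ₂) :
    a ≤ knk a b s ξ₁ ξ₂ ∧ knk a b s ξ₁ ξ₂ ≤ b := by
  unfold knk
  split_ifs with h
  · exact ⟨hab, le_rfl⟩
  · have hlt : ξ₁ < ξ₂ := lt_of_le_of_ne (h₁.trans h₂) (Ne.symm h)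
    have hd : (0:ℝ) < ξ₂ - ξ₁ := by linarith
    constructor
    · have : (0:ℝ) ≤ (b - a) * (ξ₂ - s) / (ξ₂ - ξ₁) :=
        div_nonneg (mul_nonneg (by linarith) (by linarith)) hd.le
      linarith
    · have hr : (b - a) * (ξ₂ - s) / (ξ₂ - ξ₁) ≤ b - a := by
        rw [div_le_iff₀ hd]; nlinarith
      linarith

lemma tsl_knk_a {a b s ξ₁ ξ₂ A : ℝ} (hab : a ≤ b) (h₁ : ξ₁ ≤ s) (h₂ : s ≤ ξ₂) :
    tsl A a (knk a b s ξ₁ ξ₂) ξ₁ ξ₂ a = A := by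
  rw [tsl_left (knk_mem hab h₁ h₂).1]; ring

lemma tsl_knk_b {a b s ξ₁ ξ₂ A : ℝ} (hab : a ≤ b) (h₁ : ξ₁ ≤ s) (h₂ : s ≤ ξ₂) :
    tsl A a (knk a b s ξ₁ ξ₂) ξ₁ ξ₂ b = A + s * (b - a) := by
  rw [tsl_right (knk_mem hab h₁ h₂).2]
  unfold knk
  split_ifs with h
  · have hs : s = ξ₁ := le_antisymm (h ▸ h₂) h₁
    rw [hs]; ring
  · have hd : ξ₂ - ξ₁ ≠ 0 := sub_ne_zero.2 h
    field_simp
    ring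

/-- Existence of solutions in dimension one: if `Ω ⊂ ℝ` is a nonempty bounded open set
and `f : ℝ → ℝ` is continuous with `f ξ ≥ γ(|ξ|)` for a continuous increasing coercive
`γ : [0,∞) → [0,∞)`, then for every Lipschitz boundary datum `u₀ : ℝ → ℝ` the problem
`inf { ess sup_{x∈Ω} f (u' x) : u Lipschitz, u = u₀ outside Ω }` admits a solution. -/
theorem exists_minimizer_dim_one
    (Ω : Set ℝ) (hne : Ω.Nonempty) (hΩo : IsOpen Ω) (hΩb : Bornology.IsBounded Ω)
    (f : ℝ → ℝ) (hf : Continuous f)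
    (γ : ℝ → ℝ) (hγcont : ContinuousOn γ (Set.Ici 0))
    (hγmono : MonotoneOn γ (Set.Ici 0)) (hγnonneg : ∀ t ∈ Set.Ici (0 : ℝ), 0 ≤ γ t)
    (hγtop : Tendsto γ atTop atTop)
    (hcoer : ∀ ξ : ℝ, γ |ξ| ≤ f ξ)
    (u₀ : ℝ → ℝ) (K₀ : ℝ≥0) (hu₀ : LipschitzWith K₀ u₀) :
    ∃ (u : ℝ → ℝ) (K : ℝ≥0), LipschitzWith K u ∧ (∀ x ∉ Ω, u x = u₀ x) ∧
      ∀ (v : ℝ → ℝ) (K' : ℝ≥0), LipschitzWith K' v → (∀ x ∉ Ω, v x = u₀ x) →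
        essSup (fun x => (f (deriv u x) : EReal)) (volume.restrict Ω) ≤
          essSup (fun x => (f (deriv v x) : EReal)) (volume.restrict Ω) := by
  classical
  have hf0 : ∀ t : ℝ, 0 ≤ f t := fun t =>
    le_trans (hγnonneg _ (abs_nonneg t)) (hcoer t)
  -- a uniform bound C for f on [-K₀, K₀]
  obtain ⟨t₀, ht₀mem, ht₀max⟩ := isCompact_Icc.exists_isMaxOn
    (Set.nonempty_Icc.2 (by simp : -(K₀:ℝ) ≤ K₀)) hf.continuousOn
  set C := f t₀ with hC
  have hCb : ∀ t : ℝ, |t| ≤ (K₀:ℝ) → f t ≤ C := by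
    intro t ht
    exact ht₀max ⟨(abs_le.1 ht).1, (abs_le.1 ht).2⟩
  -- coercivity radius R
  obtain ⟨R₀, hR₀⟩ := Filter.eventually_atTop.1 (hγtop.eventually_gt_atTop C)
  set R := max R₀ (K₀:ℝ) with hRdef
  have hRK : (K₀:ℝ) ≤ R := le_max_right _ _
  have hR0 : (0:ℝ) ≤ R := K₀.coe_nonneg.trans hRK
  have hR : ∀ t : ℝ, R < |t| → C < f t := by
    intro t ht
    have h1 : C < γ |t| := hR₀ |t| (le_of_lt (lt_of_le_of_lt (le_max_left _ _) ht))
    exact h1.trans_le (hcoer t)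
  -- the optimal two-slope pair as a function of the mean slope
  have Hpair : ∀ t : ℝ, |t| ≤ (K₀:ℝ) → ∃ ξ₁ ξ₂ : ℝ, ξ₁ ≤ t ∧ t ≤ ξ₂ ∧ |ξ₁| ≤ R ∧ |ξ₂| ≤ R ∧
      ∀ η₁ η₂ : ℝ, η₁ ≤ t → t ≤ η₂ → max (f ξ₁) (f ξ₂) ≤ max (f η₁) (f η₂) := by
    intro t ht
    exact exists_min_pair hf hR (ht.trans hRK) (hCb t ht)
  choose! Ξ₁ Ξ₂ hΞ₁ hΞ₂ hΞ₁R hΞ₂R hΞmin using Hpair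
  -- component machinery
  set cc : ℝ → Set ℝ := fun x => connectedComponentIn Ω x with hccdef
  have h_open : ∀ x, IsOpen (cc x) := fun x => hΩo.connectedComponentIn
  have h_sub : ∀ x, cc x ⊆ Ω := fun x => connectedComponentIn_subset _ _
  have h_Ioo : ∀ x ∈ Ω, cc x = Set.Ioo (sInf (cc x)) (sSup (cc x)) := by
    intro x hx
    exact open_eq_Ioo (h_open x) (isPreconnected_connectedComponentIn).ordConnected
      (hΩb.subset (h_sub x)) ⟨x, mem_connectedComponentIn hx⟩
  have h_mem : ∀ x ∈ Ω, x ∈ Set.Ioo (sInf (cc x)) (sSup (cc x)) := by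
    intro x hx
    rw [← h_Ioo x hx]
    exact mem_connectedComponentIn hx
  have h_eq : ∀ x ∈ Ω, ∀ y ∈ cc x, cc y = cc x := by
    intro x _ y hy
    exact (connectedComponentIn_eq hy).symm
  -- endpoints are outside Ω
  have h_nota : ∀ x ∈ Ω, sInf (cc x) ∉ Ω := by
    intro x hx haΩ
    set a := sInf (cc x) with ha
    obtain ⟨hax, hxb⟩ := h_mem x hx
    obtain ⟨ε, hε, hball⟩ := Metric.mem_nhds_iff.1
      (connectedComponentIn_mem_nhds (hΩo.mem_nhds haΩ))
    set y := a + min (ε/2) ((x - a)/2) with hy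
    have hmin0 : 0 < min (ε/2) ((x - a)/2) := lt_min (by linarith) (by linarith)
    have hy1 : y ∈ Metric.ball a ε := by
      rw [Metric.mem_ball, Real.dist_eq, hy]
      rw [abs_of_pos (by linarith)]
      have := min_le_left (ε/2) ((x - a)/2)
      linarith
    have hy2 : y ∈ cc x := by
      rw [h_Ioo x hx]
      refine ⟨by rw [hy]; linarith, ?_⟩
      have := min_le_right (ε/2) ((x - a)/2)
      rw [hy]; linarith
    have h3 : cc a = cc x := by
      have h4 : cc a = cc y := connectedComponentIn_eq (hball hy1)
      have h5 : cc y = cc x := h_eq x hx y hy2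
      rw [h4, h5]
    have : a ∈ cc x := by
      rw [← h3]
      exact mem_connectedComponentIn haΩ
    rw [h_Ioo x hx] at this
    exact lt_irrefl a this.1
  have h_notb : ∀ x ∈ Ω, sSup (cc x) ∉ Ω := by
    intro x hx hbΩ
    set b := sSup (cc x) with hb
    obtain ⟨hax, hxb⟩ := h_mem x hx
    obtain ⟨ε, hε, hball⟩ := Metric.mem_nhds_iff.1
      (connectedComponentIn_mem_nhds (hΩo.mem_nhds hbΩ))
    set y := b - min (ε/2) ((b - x)/2) with hy
    have hmin0 : 0 < min (ε/2) ((b - x)/2) := lt_min (by linarith) (by linarith)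
    have hy1 : y ∈ Metric.ball b ε := by
      rw [Metric.mem_ball, Real.dist_eq, hy]
      rw [abs_of_neg (by linarith)]
      have := min_le_left (ε/2) ((b - x)/2)
      linarith
    have hy2 : y ∈ cc x := by
      rw [h_Ioo x hx]
      refine ⟨?_, by rw [hy]; linarith⟩
      have := min_le_right (ε/2) ((b - x)/2)
      rw [hy]; linarith
    have h3 : cc b = cc x := by
      have h4 : cc b = cc y := connectedComponentIn_eq (hball hy1)
      have h5 : cc y = cc x := h_eq x hx y hy2
      rw [h4, h5]
    have : b ∈ cc x := by
      rw [← h3]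
      exact mem_connectedComponentIn hbΩ
    rw [h_Ioo x hx] at this
    exact lt_irrefl b this.2
  -- slope of a component
  set sl : Set ℝ → ℝ := fun T => (u₀ (sSup T) - u₀ (sInf T)) / (sSup T - sInf T) with hsldef
  have h_sl : ∀ x ∈ Ω, |sl (cc x)| ≤ (K₀:ℝ) := by
    intro x hx
    obtain ⟨hax, hxb⟩ := h_mem x hx
    have hab : sInf (cc x) < sSup (cc x) := hax.trans hxb
    have h1 : |u₀ (sSup (cc x)) - u₀ (sInf (cc x))| ≤ K₀ * |sSup (cc x) - sInf (cc x)| := by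
      have := hu₀.dist_le_mul (sSup (cc x)) (sInf (cc x))
      rwa [Real.dist_eq, Real.dist_eq] at this
    rw [hsldef]
    simp only
    rw [abs_div]
    rw [div_le_iff₀ (by rw [abs_of_pos (by linarith)]; linarith)]
    exact h1
  -- the candidate minimizer
  set W : Set ℝ → ℝ → ℝ := fun T =>
    tsl (u₀ (sInf T)) (sInf T) (knk (sInf T) (sSup T) (sl T) (Ξ₁ (sl T)) (Ξ₂ (sl T)))
      (Ξ₁ (sl T)) (Ξ₂ (sl T)) with hWdef
  set u : ℝ → ℝ := fun z => if z ∈ Ω then W (cc z) z else u₀ z with hudef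
  have h_uW : ∀ x ∈ Ω, ∀ y ∈ cc x, u y = W (cc x) y := by
    intro x hx y hy
    have hyΩ : y ∈ Ω := h_sub x hy
    rw [hudef]
    simp only [if_pos hyΩ]
    rw [h_eq x hx y hy]
  have h_Wa : ∀ x ∈ Ω, W (cc x) (sInf (cc x)) = u₀ (sInf (cc x)) := by
    intro x hx
    obtain ⟨hax, hxb⟩ := h_mem x hx
    exact tsl_knk_a (by linarith) (hΞ₁ _ (h_sl x hx)) (hΞ₂ _ (h_sl x hx))
  have h_Wb : ∀ x ∈ Ω, W (cc x) (sSup (cc x)) = u₀ (sSup (cc x)) := by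
    intro x hx
    obtain ⟨hax, hxb⟩ := h_mem x hx
    have hab : sInf (cc x) < sSup (cc x) := hax.trans hxb
    rw [hWdef]
    simp only
    rw [tsl_knk_b (by linarith) (hΞ₁ _ (h_sl x hx)) (hΞ₂ _ (h_sl x hx))]
    rw [hsldef]
    have hba : sSup (cc x) - sInf (cc x) ≠ 0 := by linarith
    field_simp
    ring
  have h_Wdist : ∀ x ∈ Ω, ∀ p q : ℝ, |W (cc x) p - W (cc x) q| ≤ R * |p - q| := by
    intro x hx p q
    have hlip : LipschitzWith R.toNNReal (W (cc x)) :=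
      tsl_lip (hΞ₁R _ (h_sl x hx)) (hΞ₂R _ (h_sl x hx))
    have := hlip.dist_le_mul p q
    rwa [Real.dist_eq, Real.dist_eq, Real.coe_toNNReal _ hR0] at this
  have h_u0dist : ∀ p q : ℝ, |u₀ p - u₀ q| ≤ (K₀:ℝ) * |p - q| := by
    intro p q
    have := hu₀.dist_le_mul p q
    rwa [Real.dist_eq, Real.dist_eq] at this
  -- global Lipschitz bound
  have key : ∀ x y : ℝ, x ≤ y → |u y - u x| ≤ ((K₀:ℝ) + R) * (y - x) := by
    intro x y hxy
    by_cases hx : x ∈ Ω <;> by_cases hy : y ∈ Ω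
    · -- both in Ω
      by_cases hsame : cc y = cc x
      · have h1 : u x = W (cc x) x := h_uW x hx x (mem_connectedComponentIn hx)
        have h2 : u y = W (cc x) y := by
          have := h_uW y hy y (mem_connectedComponentIn hy)
          rwa [hsame] at this
        rw [h1, h2]
        calc |W (cc x) y - W (cc x) x| ≤ R * |y - x| := h_Wdist x hx y x
          _ ≤ ((K₀:ℝ) + R) * (y - x) := by
              rw [abs_of_nonneg (by linarith)]
              nlinarith [K₀.coe_nonneg]
      · -- different components
        obtain ⟨hax, hxb⟩ := h_mem x hx
        obtain ⟨hay, hyb⟩ := h_mem y hy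
        set b := sSup (cc x) with hbdef
        set a' := sInf (cc y) with ha'def
        have hynot : y ∉ cc x := by
          intro hmem
          exact hsame (h_eq x hx y hmem)
        have hby : b ≤ y := by
          by_contra hlt
          push_neg at hlt
          exact hynot (by rw [h_Ioo x hx]; exact ⟨by linarith, hlt⟩)
        have hbΩ : b ∉ Ω := h_notb x hx
        have hba' : b ≤ a' := by
          by_contra hlt
          push_neg at hlt
          have : b ∈ cc y := by
            rw [h_Ioo y hy]
            exact ⟨hlt, lt_of_le_of_lt hby hyb⟩
          exact hbΩ (h_sub y this)
        have h1 : u x = W (cc x) x := h_uW x hx x (mem_connectedComponentIn hx)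
        have h2 : u y = W (cc y) y := h_uW y hy y (mem_connectedComponentIn hy)
        have e1 : |W (cc y) y - W (cc y) a'| ≤ R * (y - a') := by
          have := h_Wdist y hy y a'
          exact le_trans this (le_of_eq (by rw [abs_of_nonneg (by linarith)]))
        have e2 : |u₀ a' - u₀ b| ≤ (K₀:ℝ) * (a' - b) := by
          have := h_u0dist a' b
          exact le_trans this (le_of_eq (by rw [abs_of_nonneg (by linarith)]))
        have e3 : |W (cc x) b - W (cc x) x| ≤ R * (b - x) := by
          have := h_Wdist x hx b x
          exact le_trans this (le_of_eq (by rw [abs_of_nonneg (by linarith)]))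
        have hWa' : W (cc y) a' = u₀ a' := h_Wa y hy
        have hWb : W (cc x) b = u₀ b := h_Wb x hx
        rw [h1, h2]
        have : |W (cc y) y - W (cc x) x| ≤
            |W (cc y) y - W (cc y) a'| + |u₀ a' - u₀ b| + |W (cc x) b - W (cc x) x| := by
          rw [hWa'] at *
          rw [hWb] at *
          calc |W (cc y) y - W (cc x) x|
              = |(W (cc y) y - u₀ a') + (u₀ a' - u₀ b) + (u₀ b - W (cc x) x)| := by ring_nf
            _ ≤ _ := by
                refine le_trans (abs_add_le _ _) ?_
                have := abs_add_le (W (cc y) y - u₀ a') (u₀ a' - u₀ b)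
                rw [abs_sub_comm (u₀ b) (W (cc x) x)]
                linarith [abs_sub_comm (W (cc x) x) (u₀ b)]
        refine le_trans this ?_
        have hK0 := K₀.coe_nonneg
        nlinarith [e1, e2, e3]
    · -- x ∈ Ω, y ∉ Ω
      obtain ⟨hax, hxb⟩ := h_mem x hx
      set b := sSup (cc x) with hbdef
      have hby : b ≤ y := by
        by_contra hlt
        push_neg at hlt
        have : y ∈ cc x := by rw [h_Ioo x hx]; exact ⟨by linarith, hlt⟩
        exact hy (h_sub x this)
      have h1 : u x = W (cc x) x := h_uW x hx x (mem_connectedComponentIn hx)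
      have h2 : u y = u₀ y := by rw [hudef]; simp only [if_neg hy]
      have hWb : W (cc x) b = u₀ b := h_Wb x hx
      have e2 : |u₀ y - u₀ b| ≤ (K₀:ℝ) * (y - b) := by
        have := h_u0dist y b
        exact le_trans this (le_of_eq (by rw [abs_of_nonneg (by linarith)]))
      have e3 : |W (cc x) b - W (cc x) x| ≤ R * (b - x) := by
        have := h_Wdist x hx b x
        exact le_trans this (le_of_eq (by rw [abs_of_nonneg (by linarith)]))
      rw [h1, h2]
      have : |u₀ y - W (cc x) x| ≤ |u₀ y - u₀ b| + |W (cc x) b - W (cc x) x| := by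
        rw [hWb]
        calc |u₀ y - W (cc x) x| = |(u₀ y - u₀ b) + (u₀ b - W (cc x) x)| := by ring_nf
          _ ≤ _ := abs_add_le _ _
      refine le_trans this ?_
      have hK0 := K₀.coe_nonneg
      nlinarith [e2, e3]
    · -- x ∉ Ω, y ∈ Ω
      obtain ⟨hay, hyb⟩ := h_mem y hy
      set a' := sInf (cc y) with ha'def
      have hxa : x ≤ a' := by
        by_contra hlt
        push_neg at hlt
        have : x ∈ cc y := by rw [h_Ioo y hy]; exact ⟨hlt, by linarith⟩
        exact hx (h_sub y this)
      have h1 : u x = u₀ x := by rw [hudef]; simp only [if_neg hx]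
      have h2 : u y = W (cc y) y := h_uW y hy y (mem_connectedComponentIn hy)
      have hWa : W (cc y) a' = u₀ a' := h_Wa y hy
      have e1 : |W (cc y) y - W (cc y) a'| ≤ R * (y - a') := by
        have := h_Wdist y hy y a'
        exact le_trans this (le_of_eq (by rw [abs_of_nonneg (by linarith)]))
      have e2 : |u₀ a' - u₀ x| ≤ (K₀:ℝ) * (a' - x) := by
        have := h_u0dist a' x
        exact le_trans this (le_of_eq (by rw [abs_of_nonneg (by linarith)]))
      rw [h1, h2]
      have : |W (cc y) y - u₀ x| ≤ |W (cc y) y - W (cc y) a'| + |u₀ a' - u₀ x| := by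
        rw [hWa] at *
        calc |W (cc y) y - u₀ x| = |(W (cc y) y - u₀ a') + (u₀ a' - u₀ x)| := by ring_nf
          _ ≤ _ := abs_add_le _ _
      refine le_trans this ?_
      have hK0 := K₀.coe_nonneg
      nlinarith [e1, e2]
    · -- both outside
      have h1 : u x = u₀ x := by rw [hudef]; simp only [if_neg hx]
      have h2 : u y = u₀ y := by rw [hudef]; simp only [if_neg hy]
      rw [h1, h2]
      calc |u₀ y - u₀ x| ≤ (K₀:ℝ) * |y - x| := h_u0dist y x
        _ ≤ ((K₀:ℝ) + R) * (y - x) := by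
            rw [abs_of_nonneg (by linarith)]
            nlinarith
  have hulip : LipschitzWith (K₀ + R.toNNReal) u := by
    refine LipschitzWith.of_dist_le_mul fun p q => ?_
    have hcoe : ((K₀ + R.toNNReal : ℝ≥0) : ℝ) = (K₀:ℝ) + R := by
      push_cast
      rw [Real.coe_toNNReal _ hR0]
    rw [Real.dist_eq, Real.dist_eq, hcoe]
    rcases le_total p q with h | h
    · rw [abs_sub_comm, abs_sub_comm p q, abs_of_nonneg (by linarith : (0:ℝ) ≤ q - p)]
      exact key p q h
    · rw [abs_of_nonneg (by linarith : (0:ℝ) ≤ p - q)]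
      exact key q p h
  have hubc : ∀ x ∉ Ω, u x = u₀ x := by
    intro x hx
    rw [hudef]; simp only [if_neg hx]
  refine ⟨u, K₀ + R.toNNReal, hulip, hubc, ?_⟩
  -- minimality
  intro v K' hv hvb
  set Tv := essSup (fun x => (f (deriv v x) : EReal)) (volume.restrict Ω) with hTv
  -- the per-component lower bound for the competitor
  have claimH : ∀ x ∈ Ω,
      ((max (f (Ξ₁ (sl (cc x)))) (f (Ξ₂ (sl (cc x)))) : ℝ) : EReal) ≤ Tv := by
    intro x hx
    obtain ⟨hax, hxb⟩ := h_mem x hx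
    set a := sInf (cc x) with hadef
    set b := sSup (cc x) with hbdef
    have hab : a < b := hax.trans hxb
    set μT := volume.restrict (Set.Ioo a b) with hμT
    set g : ℝ → EReal := fun z => (f (deriv v z) : EReal) with hg
    have hmono : essSup g μT ≤ Tv := by
      refine essSup_mono_measure ?_
      refine Measure.absolutelyContinuous_of_le (Measure.restrict_mono ?_ le_rfl)
      rw [← h_Ioo x hx]
      exact h_sub x
    by_cases htop : essSup g μT = ⊤
    · exact le_trans le_top (htop ▸ hmono)
    have hμ0 : μT ≠ 0 := by
      show volume.restrict (Set.Ioo a b) ≠ 0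
      rw [Ne, Measure.restrict_eq_zero]
      rw [Real.volume_Ioo]
      simp only [ne_eq, ENNReal.ofReal_eq_zero, not_le]
      linarith
    have hge0 : (0 : EReal) ≤ essSup g μT := by
      have h1 : essSup (fun _ : ℝ => (0 : EReal)) μT ≤ essSup g μT := by
        refine essSup_mono_ae (Filter.Eventually.of_forall fun z => ?_)
        exact (show (0:EReal) ≤ ((f (deriv v z) : ℝ) : EReal) by
          exact_mod_cast hf0 (deriv v z))
      rwa [essSup_const _ hμ0] at h1
    have hnebot : essSup g μT ≠ ⊥ := ne_bot_of_le_ne_bot (by simp) hge0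
    set M := (essSup g μT).toReal with hM
    have hMeq : (M : EReal) = essSup g μT := EReal.coe_toReal htop hnebot
    have hae : ∀ᵐ z ∂μT, f (deriv v z) ≤ M := by
      filter_upwards [ae_le_essSup (f := g) (μ := μT)] with z hz
      rw [← hMeq] at hz
      have hz' : ((f (deriv v z) : ℝ) : EReal) ≤ (M : EReal) := hz
      exact_mod_cast hz'
    obtain ⟨ξu, hξu1, hξu2⟩ := exists_upper hf hv hab hae
    obtain ⟨ξl, hξl1, hξl2⟩ := exists_lower hf hv hab hae
    have hsv : (v b - v a) / (b - a) = sl (cc x) := by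
      rw [hsldef]
      simp only
      rw [hvb a (h_nota x hx), hvb b (h_notb x hx)]
    rw [hsv] at hξu1 hξl1
    have hminle : max (f (Ξ₁ (sl (cc x)))) (f (Ξ₂ (sl (cc x)))) ≤ M := by
      refine le_trans (hΞmin _ (h_sl x hx) ξl ξu hξl1 hξu1) ?_
      exact max_le hξl2 hξu2
    calc ((max (f (Ξ₁ (sl (cc x)))) (f (Ξ₂ (sl (cc x)))) : ℝ) : EReal)
        ≤ (M : EReal) := by exact_mod_cast hminle
      _ = essSup g μT := hMeq
      _ ≤ Tv := hmono
  -- the bad (kink) set is null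
  set knT : Set ℝ → ℝ := fun T => knk (sInf T) (sSup T) (sl T) (Ξ₁ (sl T)) (Ξ₂ (sl T))
    with hknT
  set 𝒞 : Set (Set ℝ) := (fun x => cc x) '' Ω with h𝒞
  have hcount : 𝒞.Countable := by
    have hpd : 𝒞.PairwiseDisjoint id := by
      intro T hT T' hT' hneq
      obtain ⟨p, hp, rfl⟩ := hT
      obtain ⟨q, hq, rfl⟩ := hT'
      rw [Function.onFun, Set.disjoint_left]
      intro z hz hz'
      exact hneq (show cc p = cc q by rw [← h_eq p hp z hz, ← h_eq q hq z hz'])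
    refine hpd.countable_of_isOpen ?_ ?_
    · rintro T ⟨p, hp, rfl⟩
      exact h_open p
    · rintro T ⟨p, hp, rfl⟩
      exact ⟨p, mem_connectedComponentIn hp⟩
  have hN : volume (⋃ T ∈ 𝒞, {knT T}) = 0 := by
    rw [measure_biUnion_null_iff hcount]
    intro T _
    exact measure_singleton _
  have hNae : ∀ᵐ z : ℝ, z ∉ ⋃ T ∈ 𝒞, {knT T} :=
    measure_eq_zero_iff_ae_notMem.1 hN
  -- a.e. value of f (deriv u) on Ω
  have claimG : ∀ᵐ z ∂(volume.restrict Ω), (f (deriv u z) : EReal) ≤ Tv := by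
    filter_upwards [ae_restrict_mem hΩo.measurableSet, ae_restrict_of_ae hNae] with z hz hzN
    obtain ⟨haz, hzb⟩ := h_mem z hz
    have hzkn : z ≠ knT (cc z) := by
      intro hzeq
      have hTmem : cc z ∈ 𝒞 := ⟨z, hz, rfl⟩
      exact hzN (Set.mem_biUnion hTmem (Set.mem_singleton_iff.2 hzeq))
    have hev : u =ᶠ[nhds z] W (cc z) := by
      filter_upwards [(h_open z).mem_nhds (mem_connectedComponentIn hz)] with w hw
      exact h_uW z hz w hw
    have hderiv : deriv u z = deriv (W (cc z)) z := hev.deriv_eq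
    rcases lt_or_gt_of_ne hzkn with hlt | hgt
    · have : deriv (W (cc z)) z = Ξ₁ (sl (cc z)) := tsl_deriv_left hlt
      rw [hderiv, this]
      refine le_trans ?_ (claimH z hz)
      exact_mod_cast le_max_left _ _
    · have : deriv (W (cc z)) z = Ξ₂ (sl (cc z)) := tsl_deriv_right hgt
      rw [hderiv, this]
      refine le_trans ?_ (claimH z hz)
      exact_mod_cast le_max_right _ _
  exact essSup_le_of_ae_le Tv claimG
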